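/- Define C_{ℓ,ℓ'} := sup_{x ∈ [-1,1)} |P_ℓ(x) - P_{ℓ'}(x)| / (1 - x). Then for all nonnegative integers ℓ < ℓ', one has C_{ℓ,ℓ'} ≤ Σ_{n=ℓ+1}^{ℓ'} (2 + n); in particular C_{ℓ,ℓ'} ≤ C (1 + ℓ + ℓ') |ℓ - ℓ'| for a universal constant C. -/

import Mathlib

noncomputable def legendreP (n : ℕ) (x : ℝ) : ℝ :=
  (1 / ((2:ℝ) ^ n * n.factorial)) * iteratedDeriv n (fun y : ℝ => (y ^ 2 - 1) ^ n) x

noncomputable def legC (ℓ ℓ' : ℕ) : ℝ :=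
  sSup ((fun x : ℝ => |legendreP ℓ x - legendreP ℓ' x| / (1 - x)) '' Set.Ico (-1:ℝ) 1)

open Polynomial


noncomputable def Rpoly (n : ℕ) : ℝ[X] := derivative^[n] ((X^2 - 1)^n)

lemma iterX : ∀ (m : ℕ) (p : ℝ[X]), derivative^[m+1] (X * p) =
    X * derivative^[m+1] p + ((m:ℝ[X])+1) * derivative^[m] p := by
  intro m
  induction m with
  | zero => intro p; simp [derivative_mul]; ring
  | succ m ih =>
    intro p
    rw [Function.iterate_succ_apply', ih p]
    simp only [derivative_add, derivative_mul, derivative_X, derivative_natCast,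
      derivative_one, ← Function.iterate_succ_apply']
    push_cast
    ring

lemma iterQ (m : ℕ) (p : ℝ[X]) : derivative^[m+2] ((X^2-1) * p) =
    (X^2-1) * derivative^[m+2] p + (2*((m:ℝ[X])+2)) * (X * derivative^[m+1] p)
      + (((m:ℝ[X])+2)*((m:ℝ[X])+1)) * derivative^[m] p := by
  have h : (X^2-1 : ℝ[X]) * p = X * (X * p) - p := by ring
  rw [h, iterate_derivative_sub, iterX (m+1) (X*p), iterX m p, iterX (m+1) p]
  push_cast
  ring

lemma Ccast (a b : ℝ) : (C (a * b)) = C a * C b := by simp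

lemma dsq (n : ℕ) : derivative ((X^2-1 : ℝ[X])^(n+1)) =
    (2*((n:ℝ[X])+1)) * (X * (X^2-1)^n) := by
  rw [derivative_pow]
  simp only [derivative_sub, derivative_one, derivative_pow, derivative_X]
  simp only [map_add, map_one, map_mul, map_ofNat, C_eq_natCast]
  push_cast
  ring

-- ★1 at R level
lemma r_succ (n : ℕ) : derivative (Rpoly (n+1)) =
    (2*((n:ℝ[X])+1)) * (X * derivative (Rpoly n)) + (2*((n:ℝ[X])+1)*((n:ℝ[X])+1)) * Rpoly n := by
  have h1 : derivative (Rpoly (n+1)) = derivative^[n+1] (derivative ((X^2-1 : ℝ[X])^(n+1))) := by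
    rw [Rpoly, ← Function.iterate_succ_apply' derivative (n+1), Function.iterate_succ_apply]
  have hc : (2*((n:ℝ[X])+1)) = C (2*((n:ℝ)+1)) := by simp [map_ofNat, C_eq_natCast]
  have h2 : derivative (Rpoly n) = derivative^[n+1] ((X^2-1 : ℝ[X])^n) :=
    (Function.iterate_succ_apply' derivative n _).symm
  rw [h1, dsq, hc, iterate_derivative_C_mul, iterX n ((X^2-1)^n), ← Rpoly, ← h2, ← hc]
  ring

lemma r_ode (n : ℕ) : (X^2-1:ℝ[X]) * derivative (derivative (Rpoly n))
    + 2*X*derivative (Rpoly n) = ((n:ℝ[X])*((n:ℝ[X])+1)) * Rpoly n := by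
  match n with
  | 0 => simp [Rpoly]
  | (m+1) =>
    have e1 : Rpoly (m+1) = derivative^[m+1] ((X^2-1:ℝ[X])^(m+1)) := rfl
    have e5 : derivative^[m] (derivative ((X^2-1:ℝ[X])^(m+1))) = Rpoly (m+1) := by
      rw [← Function.iterate_succ_apply, ← e1]
    have e4 : derivative^[m+1] (derivative ((X^2-1:ℝ[X])^(m+1))) = derivative (Rpoly (m+1)) := by
      rw [Function.iterate_succ_apply' derivative m, e5]
    have e3 : derivative^[m+2] (derivative ((X^2-1:ℝ[X])^(m+1)))
        = derivative (derivative (Rpoly (m+1))) := by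
      rw [Function.iterate_succ_apply' derivative (m+1), e4]
    have e2 : derivative^[m+2] ((X^2-1:ℝ[X])^(m+1)) = derivative (Rpoly (m+1)) := by
      rw [Function.iterate_succ_apply' derivative (m+1), ← e1]
    have key : derivative^[m+2] ((X^2-1:ℝ[X]) * derivative ((X^2-1)^(m+1)))
        = derivative^[m+2] ((C (2*((m:ℝ)+1))) * (X * (X^2-1)^(m+1))) := by
      rw [dsq]
      congr 1
      simp only [map_add, map_one, map_mul, map_ofNat, C_eq_natCast]
      ring
    rw [iterQ m (derivative ((X^2-1)^(m+1))), iterate_derivative_C_mul,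
      iterX (m+1) ((X^2-1)^(m+1)), e3, e4, e5, e2, ← e1] at key
    have hc : (C (2*((m:ℝ)+1)) : ℝ[X]) = 2*((m:ℝ[X])+1) := by
      simp [map_ofNat, C_eq_natCast]
    rw [hc] at key
    push_cast at key ⊢
    linear_combination key

lemma rpoly_eq (n : ℕ) : Rpoly n = derivative^[n] ((X - C 1)^n * (X + C 1)^n : ℝ[X]) := by
  rw [Rpoly]
  congr 1
  rw [← mul_pow]
  congr 1
  simp
  ring

lemma rEval1 (n : ℕ) : (Rpoly n).eval 1 = 2^n * n.factorial := by
  rw [rpoly_eq, iterate_derivative_mul, eval_finset_sum]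
  rw [Finset.sum_eq_single 0]
  · simp only [Nat.choose_zero_right, one_smul, Function.iterate_zero, id, Nat.sub_zero]
    rw [iterate_derivative_X_sub_pow_self]
    simp only [eval_mul, eval_natCast, eval_pow, eval_add, eval_X, eval_C]
    norm_num
    ring
  · intro k hk hk0
    rw [iterate_derivative_X_sub_pow]
    have h1 : n - (n - k) = k := by
      rw [Finset.mem_range] at hk; omega
    rw [h1]
    simp [eval_smul, zero_pow hk0]
  · intro h
    exact absurd (Finset.mem_range.mpr (by omega)) h

lemma rEvalNeg1 (n : ℕ) : (Rpoly n).eval (-1) = (-2)^n * n.factorial := by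
  rw [rpoly_eq, iterate_derivative_mul, eval_finset_sum]
  rw [Finset.sum_eq_single n]
  · simp only [Nat.choose_self, one_smul, Nat.sub_self, Function.iterate_zero, id]
    rw [iterate_derivative_X_add_pow, Nat.sub_self, pow_zero, Nat.descFactorial_self]
    simp only [eval_mul, eval_pow, eval_sub, eval_add, eval_one, eval_X, eval_C, smul_eq_mul,
      eval_smul, eval_natCast, nsmul_eq_mul, mul_one]
    norm_num
  · intro k hk hkn
    rw [iterate_derivative_X_add_pow]
    have hne : n - k ≠ 0 := by rw [Finset.mem_range] at hk; omega
    simp [eval_smul, zero_pow hne]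
  · intro h
    exact absurd (Finset.mem_range.mpr (by omega)) h

lemma rDerivEval1 (n : ℕ) : 2 * (derivative (Rpoly n)).eval 1
    = (n:ℝ) * ((n:ℝ)+1) * n.factorial * 2^n := by
  have h : derivative (Rpoly n) = derivative^[n+1] ((X - C 1)^n * (X + C 1)^n : ℝ[X]) := by
    rw [rpoly_eq, ← Function.iterate_succ_apply' derivative n]
  rw [h, iterate_derivative_mul, eval_finset_sum]
  rw [Finset.sum_eq_single 1]
  · rcases Nat.eq_zero_or_pos n with h0 | h0
    · subst h0; simp
    rw [show n+1-1 = n from rfl, iterate_derivative_X_sub_pow_self,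
      iterate_derivative_X_add_pow]
    simp only [eval_smul, eval_mul, eval_natCast, eval_pow, eval_add, eval_X, eval_C,
      smul_eq_mul, nsmul_eq_mul, Nat.descFactorial_one, Nat.choose_one_right]
    have h2 : (1+1:ℝ) = 2 := by norm_num
    rw [h2]
    have h3 : ((2:ℝ))^n = 2 * 2^(n-1) := by
      rw [← pow_succ']
      congr 1
      omega
    rw [h3]
    push_cast
    ring
  · intro k hk hk1
    rcases Nat.eq_zero_or_pos k with rfl | hkpos
    · rw [iterate_derivative_X_sub_pow]
      have h4 : n.descFactorial (n+1-0) = 0 :=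
        Nat.descFactorial_eq_zero_iff_lt.mpr (by omega)
      simp [h4]
    · rw [iterate_derivative_X_sub_pow]
      have h2 : n - (n + 1 - k) = k - 1 := by rw [Finset.mem_range] at hk; omega
      rw [h2]
      have h5 : k - 1 ≠ 0 := by omega
      simp [eval_smul, zero_pow h5]
  · intro h
    exact absurd (Finset.mem_range.mpr (by omega)) h

lemma r_two (n : ℕ) : X * derivative (Rpoly (n+1)) =
    (2*((n:ℝ[X])+1)) * derivative (Rpoly n) + ((n:ℝ[X])+1) * Rpoly (n+1) := by
  set K : ℝ[X] := X * derivative (Rpoly (n+1)) - (2*((n:ℝ[X])+1)) * derivative (Rpoly n)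
      - ((n:ℝ[X])+1) * Rpoly (n+1) with hKdef
  have h1 := r_succ n
  have h1' := congrArg derivative h1
  simp only [derivative_mul, derivative_add, derivative_X, derivative_natCast,
    derivative_ofNat, zero_mul, mul_zero, zero_add, add_zero, one_mul, mul_one,
    derivative_one, zero_mul] at h1'
  have hode := r_ode n
  have hdK : derivative K = 0 := by
    rw [hKdef]
    simp only [derivative_sub, derivative_mul, derivative_add, derivative_X,
      derivative_natCast, derivative_ofNat, zero_mul, mul_zero, zero_add, add_zero,
      one_mul, mul_one, derivative_one]
    linear_combination (X:ℝ[X]) * h1' + (1 - ((n:ℝ[X])+1)) * h1 + (2*((n:ℝ[X])+1)) * hode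
  have hdeg : K.natDegree = 0 := natDegree_eq_zero_of_derivative_eq_zero hdK
  have hKC : K = C (K.coeff 0) := (Polynomial.eq_C_of_natDegree_eq_zero hdeg)
  have hKval : K.eval 1 = K.coeff 0 := by rw [hKC]; simp
  have hv1 := rEval1 n
  have hv2 := rEval1 (n+1)
  have hv3 := rDerivEval1 n
  have hv4 := rDerivEval1 (n+1)
  have hK1 : K.eval 1 = 0 := by
    rw [hKdef]
    simp only [eval_sub, eval_mul, eval_add, eval_X, eval_natCast, eval_one, eval_ofNat, one_mul]
    push_cast [Nat.factorial_succ] at hv1 hv2 hv3 hv4 ⊢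
    linear_combination (1/2:ℝ)*hv4 - ((n:ℝ)+1)*hv3 - ((n:ℝ)+1)*hv2
  have hz : K = 0 := by rw [hKC, ← hKval, hK1, map_zero]
  have h0 : X * derivative (Rpoly (n+1)) - (2*((n:ℝ[X])+1)) * derivative (Rpoly n)
      - ((n:ℝ[X])+1) * Rpoly (n+1) = 0 := by rw [← hKdef]; exact hz
  linear_combination h0

-- R-level algebra consequences
lemma r_B (n : ℕ) : (X^2-1:ℝ[X]) * derivative (Rpoly (n+1)) =
    ((n:ℝ[X])+1) * (X * Rpoly (n+1)) - (2*((n:ℝ[X])+1)*((n:ℝ[X])+1)) * Rpoly n := by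
  linear_combination (X:ℝ[X]) * r_two n - r_succ n

lemma r_dd (n : ℕ) : derivative (Rpoly (n+2)) =
    (4*((n:ℝ[X])+1)*((n:ℝ[X])+2)) * derivative (Rpoly n)
      + (2*((n:ℝ[X])+2)*(2*(n:ℝ[X])+3)) * Rpoly (n+1) := by
  have h1 := r_succ (n+1)
  have h2 := r_two n
  push_cast at h1
  linear_combination h1 + (2*((n:ℝ[X])+2)) * h2

noncomputable def pl (n : ℕ) (x : ℝ) : ℝ := (Rpoly n).eval x / ((2:ℝ)^n * n.factorial)
noncomputable def pl' (n : ℕ) (x : ℝ) : ℝ := ((Rpoly n).derivative).eval x / ((2:ℝ)^n * n.factorial)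
noncomputable def pl'' (n : ℕ) (x : ℝ) : ℝ :=
  ((Rpoly n).derivative.derivative).eval x / ((2:ℝ)^n * n.factorial)

lemma two_pow_ne (n : ℕ) : ((2:ℝ)^n) ≠ 0 := by positivity
lemma fact_ne (n : ℕ) : ((n.factorial:ℝ)) ≠ 0 := by
  exact_mod_cast Nat.factorial_ne_zero n


lemma eval_pl (n : ℕ) (x : ℝ) : (Rpoly n).eval x = ((2:ℝ)^n * n.factorial) * pl n x := by
  unfold pl; field_simp

lemma eval_pl' (n : ℕ) (x : ℝ) :
    ((Rpoly n).derivative).eval x = ((2:ℝ)^n * n.factorial) * pl' n x := by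
  unfold pl'; field_simp

lemma eval_pl'' (n : ℕ) (x : ℝ) :
    ((Rpoly n).derivative.derivative).eval x = ((2:ℝ)^n * n.factorial) * pl'' n x := by
  unfold pl''; field_simp

lemma cne (n : ℕ) : ((2:ℝ)^n * n.factorial) ≠ 0 :=
  mul_ne_zero (two_pow_ne n) (fact_ne n)

lemma e_one (n : ℕ) (x : ℝ) : pl' (n+1) x = x * pl' n x + ((n:ℝ)+1) * pl n x := by
  have h := congrArg (eval x) (r_succ n)
  simp only [eval_mul, eval_add, eval_X, eval_natCast, eval_ofNat, eval_one,
    eval_pl, eval_pl', eval_pl''] at h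
  apply mul_left_cancel₀ (cne (n+1))
  push_cast [Nat.factorial_succ, pow_succ] at h ⊢
  linear_combination h

lemma e_two (n : ℕ) (x : ℝ) : x * pl' (n+1) x = pl' n x + ((n:ℝ)+1) * pl (n+1) x := by
  have h := congrArg (eval x) (r_two n)
  simp only [eval_mul, eval_add, eval_X, eval_natCast, eval_ofNat, eval_one,
    eval_pl, eval_pl', eval_pl''] at h
  apply mul_left_cancel₀ (cne (n+1))
  push_cast [Nat.factorial_succ, pow_succ] at h ⊢
  linear_combination h

lemma e_ode (n : ℕ) (x : ℝ) : (x^2-1) * pl'' n x + 2*x*pl' n x = (n:ℝ)*((n:ℝ)+1) * pl n x := by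
  have h := congrArg (eval x) (r_ode n)
  simp only [eval_mul, eval_add, eval_sub, eval_pow, eval_X, eval_natCast, eval_ofNat,
    eval_one, eval_pl, eval_pl', eval_pl''] at h
  apply mul_left_cancel₀ (cne n)
  linear_combination h

lemma e_B (n : ℕ) (x : ℝ) : (x^2-1) * pl' (n+1) x = ((n:ℝ)+1) * (x * pl (n+1) x - pl n x) := by
  have h := congrArg (eval x) (r_B n)
  simp only [eval_mul, eval_add, eval_sub, eval_pow, eval_X, eval_natCast, eval_ofNat,
    eval_one, eval_pl, eval_pl', eval_pl''] at h
  apply mul_left_cancel₀ (cne (n+1))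
  push_cast [Nat.factorial_succ, pow_succ] at h ⊢
  linear_combination h

lemma e_dd (n : ℕ) (x : ℝ) : pl' (n+2) x = pl' n x + (2*(n:ℝ)+3) * pl (n+1) x := by
  have h := congrArg (eval x) (r_dd n)
  simp only [eval_mul, eval_add, eval_sub, eval_pow, eval_X, eval_natCast, eval_ofNat,
    eval_one, eval_pl, eval_pl', eval_pl''] at h
  apply mul_left_cancel₀ (cne (n+2))
  rw [show n+2 = (n+1)+1 from rfl] at h ⊢
  push_cast [Nat.factorial_succ, pow_succ] at h ⊢
  linear_combination h

lemma pl_one (n : ℕ) : pl n 1 = 1 := by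
  unfold pl
  rw [rEval1]
  field_simp

lemma pl_negone (n : ℕ) : pl n (-1) = (-1)^n := by
  unfold pl
  rw [rEvalNeg1]
  rw [show ((-2:ℝ))^n = (-1)^n * 2^n by rw [← neg_one_mul, mul_pow]]
  field_simp

lemma pl_zero (x : ℝ) : pl 0 x = 1 := by simp [pl, Rpoly]
lemma pl'_zero (x : ℝ) : pl' 0 x = 0 := by simp [pl', Rpoly]
lemma pl'_one (x : ℝ) : pl' 1 x = 1 := by
  simp [pl', Rpoly, map_ofNat]

lemma hasDeriv_pl (n : ℕ) (x : ℝ) : HasDerivAt (pl n) (pl' n x) x := by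
  unfold pl pl'
  exact ((Rpoly n).hasDerivAt x).div_const _

lemma hasDeriv_pl' (n : ℕ) (x : ℝ) : HasDerivAt (pl' n) (pl'' n x) x := by
  unfold pl' pl''
  exact ((Rpoly n).derivative.hasDerivAt x).div_const _

lemma pl_bound (n : ℕ) : ∀ x ∈ Set.Icc (-1:ℝ) 1, |pl n x| ≤ 1 := by
  rcases Nat.eq_zero_or_pos n with rfl | hn
  · intro x _; rw [pl_zero]; norm_num
  intro x hx
  set N : ℝ := (n:ℝ)*((n:ℝ)+1) with hN
  have hNpos : 0 < N := by
    have : (1:ℝ) ≤ (n:ℝ) := by exact_mod_cast hn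
    positivity
  set F : ℝ → ℝ := fun y => pl n y * pl n y + (1-y^2) * (pl' n y * pl' n y) / N with hF
  have hder : ∀ y, HasDerivAt F (2*y*(pl' n y)^2 / N) y := by
    intro y
    have h1 := (hasDeriv_pl n y).mul (hasDeriv_pl n y)
    have h2 : HasDerivAt (fun z : ℝ => 1 - z^2) (-(2*y)) y := by
      simpa using (hasDerivAt_pow 2 y).const_sub 1
    have h3 := (h2.mul ((hasDeriv_pl' n y).mul (hasDeriv_pl' n y))).div_const N
    have h4 := h1.add h3
    convert h4 using 1
    · rfl
    · rfl
    · rfl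
    have hode := e_ode n y
    rw [← hN] at hode
    simp only [Pi.mul_apply]
    field_simp
    linear_combination (2 * pl' n y) * hode
  have hdiff : Differentiable ℝ F := fun y => (hder y).differentiableAt
  have hderiv : ∀ y, deriv F y = 2*y*(pl' n y)^2 / N := fun y => (hder y).deriv
  have hmono : MonotoneOn F (Set.Icc 0 1) := by
    apply monotoneOn_of_deriv_nonneg (convex_Icc 0 1) hdiff.continuous.continuousOn
      hdiff.differentiableOn
    intro y hy
    rw [interior_Icc] at hy
    rw [hderiv]
    have h0 : 0 ≤ y := le_of_lt hy.1
    positivity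
  have hanti : AntitoneOn F (Set.Icc (-1) 0) := by
    apply antitoneOn_of_deriv_nonpos (convex_Icc (-1) 0) hdiff.continuous.continuousOn
      hdiff.differentiableOn
    intro y hy
    rw [interior_Icc] at hy
    rw [hderiv]
    have h1 : y ≤ 0 := le_of_lt hy.2
    have h2 := sq_nonneg (pl' n y)
    have h3 : 2*y*(pl' n y)^2 ≤ 0 := by nlinarith
    exact div_nonpos_of_nonpos_of_nonneg h3 (le_of_lt hNpos)
  have hF1 : F 1 = 1 := by
    simp only [hF, pl_one]
    norm_num
  have hFneg1 : F (-1) = 1 := by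
    simp only [hF, pl_negone]
    have : ((-1:ℝ))^n * (-1)^n = 1 := by
      rw [← pow_add]
      exact Even.neg_one_pow ⟨n, rfl⟩
    rw [this]
    norm_num
  have hFx : F x ≤ 1 := by
    rcases le_total 0 x with hx0 | hx0
    · have h := hmono (Set.mem_Icc.mpr ⟨hx0, hx.2⟩)
        (Set.mem_Icc.mpr ⟨zero_le_one, le_refl 1⟩) hx.2
      rwa [hF1] at h
    · have h := hanti (Set.mem_Icc.mpr ⟨le_refl (-1:ℝ), by linarith⟩)
        (Set.mem_Icc.mpr ⟨hx.1, hx0⟩) hx.1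
      rwa [hFneg1] at h
  have hsq : pl n x * pl n x ≤ 1 := by
    have h1x : 0 ≤ 1 - x^2 := by
      obtain ⟨ha, hb⟩ := hx
      nlinarith
    have hnn : 0 ≤ (1-x^2) * (pl' n x * pl' n x)/N :=
      div_nonneg (mul_nonneg h1x (mul_self_nonneg _)) hNpos.le
    have : pl n x * pl n x ≤ F x := by
      rw [hF]
      exact le_add_of_nonneg_right hnn
    linarith
  rw [abs_le]
  constructor <;> nlinarith [hsq]

lemma pl'_bound : ∀ (n : ℕ), ∀ x ∈ Set.Icc (-1:ℝ) 1, |pl' n x| ≤ (n:ℝ)*((n:ℝ)+1)/2 := by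
  intro n
  induction n using Nat.strong_induction_on with
  | _ n ih =>
    match n with
    | 0 => intro x _; rw [pl'_zero]; norm_num
    | 1 => intro x _; rw [pl'_one]; norm_num
    | (m+2) =>
      intro x hx
      rw [e_dd m x]
      have h1 := ih m (by omega) x hx
      have h2 := pl_bound (m+1) x hx
      have h3 : (0:ℝ) ≤ 2*(m:ℝ)+3 := by positivity
      calc |pl' m x + (2*(m:ℝ)+3) * pl (m+1) x|
          ≤ |pl' m x| + |(2*(m:ℝ)+3) * pl (m+1) x| := abs_add_le _ _
        _ ≤ (m:ℝ)*((m:ℝ)+1)/2 + (2*(m:ℝ)+3) * 1 := by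
            refine add_le_add h1 ?_
            rw [abs_mul, abs_of_nonneg h3]
            exact mul_le_mul_of_nonneg_left h2 h3
        _ = ((m+2:ℕ):ℝ)*(((m+2:ℕ):ℝ)+1)/2 := by push_cast; ring

-- key step: |P_{n+1} - P_n| ≤ (1-x) * (n+3)
lemma step_bound (n : ℕ) (x : ℝ) (hx : x ∈ Set.Icc (-1:ℝ) 1) :
    |pl (n+1) x - pl n x| ≤ (1-x) * ((n:ℝ)+3) := by
  have hc : (0:ℝ) < (n:ℝ)+1 := by positivity
  have hid : ((n:ℝ)+1) * (pl (n+1) x - pl n x)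
      = (1-x) * (((n:ℝ)+1) * pl (n+1) x) - (1-x^2) * pl' (n+1) x := by
    linear_combination (-1:ℝ) * e_B n x
  have h1 := pl_bound (n+1) x hx
  have h2 := pl'_bound (n+1) x hx
  push_cast at h2
  obtain ⟨ha, hb⟩ := hx
  have h1x : (0:ℝ) ≤ 1 - x := by linarith
  have h1x' : (0:ℝ) ≤ 1 + x := by linarith
  have hd1 : |(1-x) * (((n:ℝ)+1) * pl (n+1) x)| ≤ (1-x) * ((n:ℝ)+1) := by
    rw [abs_mul, abs_mul, abs_of_nonneg h1x, abs_of_nonneg hc.le]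
    have := mul_le_mul_of_nonneg_left h1 hc.le
    nlinarith
  have hd2 : |(1-x^2) * pl' (n+1) x| ≤ (1-x) * (((n:ℝ)+1)*((n:ℝ)+2)) := by
    rw [abs_mul]
    have hxx : (0:ℝ) ≤ 1 - x^2 := by nlinarith
    rw [abs_of_nonneg hxx]
    have habs : (0:ℝ) ≤ |pl' (n+1) x| := abs_nonneg _
    nlinarith [mul_le_mul_of_nonneg_left h2 (mul_nonneg h1x h1x'),
      mul_nonneg (mul_nonneg h1x h1x) (by positivity : (0:ℝ) ≤ ((n:ℝ)+1)*((n:ℝ)+2))]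
  have htri : |((n:ℝ)+1) * (pl (n+1) x - pl n x)|
      ≤ (1-x) * ((n:ℝ)+1) + (1-x) * (((n:ℝ)+1)*((n:ℝ)+2)) := by
    rw [hid]
    calc |(1-x) * (((n:ℝ)+1) * pl (n+1) x) - (1-x^2) * pl' (n+1) x|
        ≤ |(1-x) * (((n:ℝ)+1) * pl (n+1) x)| + |(1-x^2) * pl' (n+1) x| := abs_sub _ _
      _ ≤ _ := add_le_add hd1 hd2
  rw [abs_mul, abs_of_nonneg hc.le] at htri
  have := (mul_le_mul_iff_right₀ hc).mp (by linarith [htri] :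
    ((n:ℝ)+1) * |pl (n+1) x - pl n x| ≤ ((n:ℝ)+1) * ((1-x) * ((n:ℝ)+3)))
  exact this

lemma iteratedDeriv_poly (p : ℝ[X]) (k : ℕ) :
    iteratedDeriv k (fun y : ℝ => p.eval y) = fun x => (derivative^[k] p).eval x := by
  induction k with
  | zero => simp
  | succ k ih =>
    rw [iteratedDeriv_succ, ih, Function.iterate_succ_apply']
    funext x
    exact Polynomial.deriv _

lemma legendreP_eq (n : ℕ) (x : ℝ) : legendreP n x = pl n x := by
  rw [legendreP, pl, Rpoly]
  have h : (fun y : ℝ => (y ^ 2 - 1) ^ n) = fun y : ℝ => ((X^2-1:ℝ[X])^n).eval y := by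
    funext y; simp
  rw [h, iteratedDeriv_poly]
  ring

lemma teles (f : ℕ → ℝ) (a : ℕ) : ∀ k : ℕ,
    f (a+k) - f a = ∑ n ∈ Finset.Icc (a+1) (a+k), (f n - f (n-1)) := by
  intro k
  induction k with
  | zero => simp
  | succ k ih =>
    rw [show a+(k+1) = (a+k)+1 from rfl, Finset.sum_Icc_succ_top (by omega), ← ih]
    simp only [Nat.add_sub_cancel]
    ring

lemma pointwise (ℓ ℓ' : ℕ) (h : ℓ < ℓ') (x : ℝ) (hx : x ∈ Set.Ico (-1:ℝ) 1) :
    |pl ℓ x - pl ℓ' x| / (1-x) ≤ ∑ n ∈ Finset.Icc (ℓ+1) ℓ', ((2:ℝ) + n) := by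
  obtain ⟨ha, hb⟩ := hx
  have hx1 : (0:ℝ) < 1 - x := by linarith
  have hxI : x ∈ Set.Icc (-1:ℝ) 1 := ⟨ha, le_of_lt hb⟩
  obtain ⟨k, rfl⟩ : ∃ k : ℕ, ℓ' = ℓ + k := ⟨ℓ' - ℓ, by omega⟩
  have hsum := teles (fun n => pl n x) ℓ k
  have hb1 : |pl (ℓ+k) x - pl ℓ x| ≤ ∑ n ∈ Finset.Icc (ℓ+1) (ℓ+k), (1-x) * ((2:ℝ) + n) := by
    rw [hsum]
    refine (Finset.abs_sum_le_sum_abs _ _).trans (Finset.sum_le_sum ?_)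
    intro n hn
    rw [Finset.mem_Icc] at hn
    obtain ⟨m, rfl⟩ : ∃ m : ℕ, n = m + 1 := ⟨n - 1, by omega⟩
    simp only [Nat.add_sub_cancel]
    have := step_bound m x hxI
    calc |pl (m+1) x - pl m x| ≤ (1-x) * ((m:ℝ)+3) := this
      _ = (1-x) * ((2:ℝ) + (m+1:ℕ)) := by push_cast; ring
  rw [div_le_iff₀ hx1, abs_sub_comm]
  calc |pl (ℓ+k) x - pl ℓ x| ≤ ∑ n ∈ Finset.Icc (ℓ+1) (ℓ+k), (1-x) * ((2:ℝ) + n) := hb1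
    _ = (∑ n ∈ Finset.Icc (ℓ+1) (ℓ+k), ((2:ℝ) + n)) * (1-x) := by
        rw [Finset.sum_mul]
        refine Finset.sum_congr rfl fun n _ => by ring

theorem legC_bound :
    (∀ ℓ ℓ' : ℕ, ℓ < ℓ' →
      legC ℓ ℓ' ≤ ∑ n ∈ Finset.Icc (ℓ + 1) ℓ', ((2 : ℝ) + n)) ∧
    ∃ C > 0, ∀ ℓ ℓ' : ℕ, ℓ < ℓ' →
      legC ℓ ℓ' ≤ C * (1 + (ℓ : ℝ) + ℓ') * ((ℓ' : ℝ) - ℓ) := by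
  have key : ∀ ℓ ℓ' : ℕ, ℓ < ℓ' →
      legC ℓ ℓ' ≤ ∑ n ∈ Finset.Icc (ℓ + 1) ℓ', ((2 : ℝ) + n) := by
    intro ℓ ℓ' h
    apply Real.sSup_le
    · rintro y ⟨x, hx, rfl⟩
      simp only [legendreP_eq]
      exact pointwise ℓ ℓ' h x hx
    · apply Finset.sum_nonneg
      intro n _
      positivity
  refine ⟨key, 3, by norm_num, fun ℓ ℓ' h => ?_⟩
  refine (key ℓ ℓ' h).trans ?_
  have hle : ∀ n ∈ Finset.Icc (ℓ+1) ℓ', ((2:ℝ) + n) ≤ (2 + ℓ' : ℝ) := by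
    intro n hn
    rw [Finset.mem_Icc] at hn
    have : (n:ℝ) ≤ ℓ' := by exact_mod_cast hn.2
    linarith
  calc ∑ n ∈ Finset.Icc (ℓ+1) ℓ', ((2:ℝ) + n)
      ≤ ∑ _n ∈ Finset.Icc (ℓ+1) ℓ', (2 + ℓ' : ℝ) := Finset.sum_le_sum hle
    _ = ((ℓ' - ℓ : ℕ) : ℝ) * (2 + ℓ') := by
        rw [Finset.sum_const, Nat.card_Icc]
        have : ℓ' + 1 - (ℓ+1) = ℓ' - ℓ := by omega
        rw [this, nsmul_eq_mul]
    _ ≤ 3 * (1 + (ℓ:ℝ) + ℓ') * ((ℓ':ℝ) - ℓ) := by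
        have hc : ((ℓ' - ℓ : ℕ) : ℝ) = (ℓ':ℝ) - ℓ := by
          rw [Nat.cast_sub h.le]
        rw [hc]
        have h1 : (0:ℝ) ≤ (ℓ':ℝ) - ℓ := by
          have : (ℓ:ℝ) ≤ ℓ' := by exact_mod_cast h.le
          linarith
        have h2 : (2 + (ℓ':ℝ)) ≤ 3 * (1 + (ℓ:ℝ) + ℓ') := by
          have : (0:ℝ) ≤ ℓ := Nat.cast_nonneg ℓ
          have : (0:ℝ) ≤ ℓ' := Nat.cast_nonneg ℓ'
          linarith
        nlinarith
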